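/- Let L = I − M be the normalized Laplacian of a d-regular, undirected, 1/2-lazy multigraph G, and let ε = ln(1/(1−λ)) for λ ∈ [0,1). Then L ≈_ε I − J if and only if λ(G) ≤ λ. -/

import Mathlib

open Matrix

/-- For a d-regular undirected 1/2-lazy multigraph G with transition matrix
M = (1/2)(T + I), and ε = ln(1/(1−λ)) with λ ∈ [0,1):
L ≈_ε I − J if and only if λ(G) ≤ λ. -/
theorem lazy_laplacian_approx_iff_eigenvalue_bound {n : ℕ} (hn : 0 < n)
    (M T : Matrix (Fin n) (Fin n) ℝ)
    (hTsym : Tᵀ = T) (hTnn : ∀ i j, 0 ≤ T i j) (hTrow : ∀ i, ∑ j, T i j = 1)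
    (hM : M = (1 / 2 : ℝ) • (T + 1))
    (lam ε : ℝ) (hlam0 : 0 ≤ lam) (hlam1 : lam < 1)
    (hε : ε = Real.log (1 / (1 - lam)))
    (J : Matrix (Fin n) (Fin n) ℝ) (hJ : J = fun _ _ => (1 : ℝ) / n) :
    (((1 - J) - Real.exp (-ε) • ((1 : Matrix (Fin n) (Fin n) ℝ) - M)).PosSemidef ∧
        (Real.exp ε • ((1 : Matrix (Fin n) (Fin n) ℝ) - M) - (1 - J)).PosSemidef)
      ↔ (∀ v : Fin n → ℝ, ∑ i, v i = 0 →
          (M *ᵥ v) ⬝ᵥ (M *ᵥ v) ≤ lam ^ 2 * (v ⬝ᵥ v)) := by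
  have h1l : (0:ℝ) < 1 - lam := by linarith
  have hn' : (n:ℝ) ≠ 0 := Nat.cast_ne_zero.mpr hn.ne'
  have hexpneg : Real.exp (-ε) = 1 - lam := by
    rw [hε, one_div, Real.log_inv, neg_neg, Real.exp_log h1l]
  have hexppos : Real.exp ε = (1 - lam)⁻¹ := by
    rw [hε, one_div, Real.log_inv, Real.exp_neg, Real.exp_log h1l]
  have hTsym' : ∀ i j, T i j = T j i := by
    intro i j
    have h := congrFun (congrFun hTsym j) i
    rwa [Matrix.transpose_apply] at h
  have hTcol : ∀ j, ∑ i, T i j = 1 := by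
    intro j
    calc ∑ i, T i j = ∑ i, T j i := Finset.sum_congr rfl fun i _ => hTsym' i j
    _ = 1 := hTrow j
  have hMsym' : ∀ i j, M i j = M j i := by
    intro i j
    simp only [hM, Matrix.smul_apply, Matrix.add_apply, Matrix.one_apply, smul_eq_mul]
    rw [hTsym' i j]
    by_cases h : i = j <;> simp [h, eq_comm]
  have hMrow : ∀ i, ∑ j, M i j = 1 := by
    intro i
    simp only [hM, Matrix.smul_apply, Matrix.add_apply, Matrix.one_apply, smul_eq_mul]
    rw [← Finset.mul_sum, Finset.sum_add_distrib, hTrow i]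
    simp
    norm_num
  have hMcol : ∀ j, ∑ i, M i j = 1 := by
    intro j
    calc ∑ i, M i j = ∑ i, M j i := Finset.sum_congr rfl fun i _ => hMsym' i j
    _ = 1 := hMrow j
  have hsumMv : ∀ v : Fin n → ℝ, ∑ i, (M *ᵥ v) i = ∑ i, v i := by
    intro v
    simp only [mulVec, dotProduct]
    rw [Finset.sum_comm]
    exact Finset.sum_congr rfl fun j _ => by rw [← Finset.sum_mul, hMcol, one_mul]
  have hMswap : ∀ x y : Fin n → ℝ, x ⬝ᵥ (M *ᵥ y) = y ⬝ᵥ (M *ᵥ x) := by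
    intro x y
    simp only [dotProduct, mulVec, Finset.mul_sum]
    rw [Finset.sum_comm]
    exact Finset.sum_congr rfl fun i _ => Finset.sum_congr rfl fun j _ => by
      rw [hMsym' j i]; ring
  have hMpsd : ∀ x : Fin n → ℝ, 0 ≤ x ⬝ᵥ (M *ᵥ x) := by
    intro x
    have s1 : ∑ i, ∑ j, T i j * (x i * x i) = x ⬝ᵥ x := by
      simp only [dotProduct]
      exact Finset.sum_congr rfl fun i _ => by rw [← Finset.sum_mul, hTrow, one_mul]
    have s3 : ∑ i, ∑ j, T i j * (x j * x j) = x ⬝ᵥ x := by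
      rw [Finset.sum_comm]
      simp only [dotProduct]
      exact Finset.sum_congr rfl fun j _ => by rw [← Finset.sum_mul, hTcol, one_mul]
    have s2 : ∑ i, ∑ j, 2 * (x i * (T i j * x j)) = 2 * (x ⬝ᵥ (T *ᵥ x)) := by
      simp only [dotProduct, mulVec, Finset.mul_sum]
    have expand : ∑ i, ∑ j, T i j * ((x i + x j) * (x i + x j))
        = (∑ i, ∑ j, T i j * (x i * x i)) + (∑ i, ∑ j, 2 * (x i * (T i j * x j)))
          + ∑ i, ∑ j, T i j * (x j * x j) := by
      rw [← Finset.sum_add_distrib, ← Finset.sum_add_distrib]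
      exact Finset.sum_congr rfl fun i _ => by
        rw [← Finset.sum_add_distrib, ← Finset.sum_add_distrib]
        exact Finset.sum_congr rfl fun j _ => by ring
    have hnn : 0 ≤ ∑ i, ∑ j, T i j * ((x i + x j) * (x i + x j)) :=
      Finset.sum_nonneg fun i _ => Finset.sum_nonneg fun j _ =>
        mul_nonneg (hTnn i j) (mul_self_nonneg _)
    rw [expand, s1, s2, s3] at hnn
    have hMx : x ⬝ᵥ (M *ᵥ x) = (1/2) * (x ⬝ᵥ (T *ᵥ x) + x ⬝ᵥ x) := by
      rw [hM, smul_mulVec, dotProduct_smul, add_mulVec, one_mulVec, dotProduct_add]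
      simp
    rw [hMx]
    linarith
  have hdot_self : ∀ x : Fin n → ℝ, 0 ≤ x ⬝ᵥ x := by
    intro x
    exact Finset.sum_nonneg fun i _ => mul_self_nonneg (x i)
  have hJv0 : ∀ w : Fin n → ℝ, ∑ i, w i = 0 → J *ᵥ w = 0 := by
    intro w hw
    funext i
    simp only [hJ, mulVec, dotProduct]
    rw [← Finset.mul_sum, hw, mul_zero]
    rfl
  constructor
  · rintro ⟨h1, h2⟩ v hv
    have stepA : ∀ w : Fin n → ℝ, ∑ i, w i = 0 → w ⬝ᵥ (M *ᵥ w) ≤ lam * (w ⬝ᵥ w) := by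
      intro w hw
      have h0 := h2.dotProduct_mulVec_nonneg w
      rw [star_trivial, sub_mulVec, smul_mulVec, sub_mulVec, sub_mulVec, one_mulVec,
        hJv0 w hw, sub_zero, dotProduct_sub, dotProduct_smul, dotProduct_sub,
        smul_eq_mul, hexppos] at h0
      have hA := hdot_self w
      have h0' : w ⬝ᵥ w ≤ (1 - lam)⁻¹ * (w ⬝ᵥ w - w ⬝ᵥ (M *ᵥ w)) := by linarith
      have h0'' := mul_le_mul_of_nonneg_left h0' h1l.le
      rw [← mul_assoc, mul_inv_cancel₀ h1l.ne', one_mul] at h0''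
      linarith
    have hu0 : ∑ i, (M *ᵥ v) i = 0 := by rw [hsumMv]; exact hv
    set u := M *ᵥ v with hu
    have hQv := stepA v hv
    have hQu := stepA u hu0
    have hquad : ∀ t : ℝ, 0 ≤ (v ⬝ᵥ (M *ᵥ v)) * (t * t) + (2 * (u ⬝ᵥ u)) * t + u ⬝ᵥ (M *ᵥ u) := by
      intro t
      have expand : (t • v + u) ⬝ᵥ (M *ᵥ (t • v + u))
          = (v ⬝ᵥ (M *ᵥ v)) * (t * t) + (2 * (u ⬝ᵥ u)) * t + u ⬝ᵥ (M *ᵥ u) := by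
        rw [mulVec_add, mulVec_smul, dotProduct_add, add_dotProduct, add_dotProduct,
          smul_dotProduct, smul_dotProduct, dotProduct_smul, dotProduct_smul,
          hMswap u v, ← hu]
        simp only [smul_eq_mul]
        ring
      rw [← expand]
      exact hMpsd _
    have hdisc := discrim_le_zero hquad
    rw [discrim] at hdisc
    have hB := hdot_self u
    have hV := hdot_self v
    rcases eq_or_lt_of_le hB with hB0 | hBpos
    · rw [← hB0]
      positivity
    · nlinarith [hMpsd u, hMpsd v, mul_le_mul hQv hQu (hMpsd u)
        (mul_nonneg hlam0 hV), hBpos]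
  · intro h
    have herm : ∀ A : Matrix (Fin n) (Fin n) ℝ, (∀ i j, A i j = A j i) → A.IsHermitian := by
      intro A hA
      ext i j
      simp only [Matrix.conjTranspose_apply, star_trivial]
      exact hA j i
    have hJsym' : ∀ i j : Fin n, J i j = J j i := by intro i j; rw [hJ]
    have key : ∀ x : Fin n → ℝ, ∃ w : Fin n → ℝ, (∑ i, w i = 0) ∧
        x ⬝ᵥ ((1 - J) *ᵥ x) = w ⬝ᵥ w ∧
        x ⬝ᵥ (((1 : Matrix (Fin n) (Fin n) ℝ) - M) *ᵥ x) = w ⬝ᵥ w - w ⬝ᵥ (M *ᵥ w) := by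
      intro x
      set c : ℝ := (∑ i, x i) / n with hc
      set w : Fin n → ℝ := fun i => x i - c with hwdef
      have hw0 : ∑ i, w i = 0 := by
        simp only [hwdef]
        rw [Finset.sum_sub_distrib, Finset.sum_const, Finset.card_univ, Fintype.card_fin,
          nsmul_eq_mul, hc]
        field_simp
        simp
      have hJx : J *ᵥ x = fun _ => c := by
        funext i
        simp only [hJ, mulVec, dotProduct]
        rw [← Finset.mul_sum, hc]
        ring
      have hcw : (fun _ => c) ⬝ᵥ w = 0 := by
        simp only [dotProduct]
        rw [← Finset.mul_sum, hw0, mul_zero]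
      have hwc : w ⬝ᵥ (fun _ => c) = 0 := by rw [dotProduct_comm]; exact hcw
      have hcMw : (fun _ => c) ⬝ᵥ (M *ᵥ w) = 0 := by
        simp only [dotProduct]
        rw [← Finset.mul_sum, hsumMv, hw0, mul_zero]
      have hMc : M *ᵥ (fun _ => c) = fun _ => c := by
        funext i
        simp only [mulVec, dotProduct]
        rw [← Finset.sum_mul, hMrow, one_mul]
      have hxw : x = w + fun _ => c := by
        funext i
        simp [hwdef]
      refine ⟨w, hw0, ?_, ?_⟩
      · rw [sub_mulVec, one_mulVec, hJx, dotProduct_sub]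
        conv_lhs => rw [hxw]
        simp only [dotProduct_add, add_dotProduct]
        rw [hcw, hwc]
        ring
      · rw [sub_mulVec, one_mulVec, dotProduct_sub]
        conv_lhs => rw [hxw]
        rw [mulVec_add, hMc]
        simp only [dotProduct_add, add_dotProduct]
        rw [hcw, hwc, hcMw]
        ring
    constructor
    · refine .of_dotProduct_mulVec_nonneg (herm _ ?_) ?_
      · intro i j
        simp only [Matrix.sub_apply, Matrix.smul_apply, Matrix.one_apply, smul_eq_mul]
        rw [hMsym' i j, hJsym' i j]
        by_cases hij : i = j <;> simp [hij, eq_comm]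
      · intro x
        rw [star_trivial, sub_mulVec, dotProduct_sub, smul_mulVec, dotProduct_smul,
          smul_eq_mul, hexpneg]
        obtain ⟨w, hw0, hq1, hq2⟩ := key x
        rw [hq1, hq2]
        nlinarith [hMpsd w, hdot_self w]
    · refine .of_dotProduct_mulVec_nonneg (herm _ ?_) ?_
      · intro i j
        simp only [Matrix.sub_apply, Matrix.smul_apply, Matrix.one_apply, smul_eq_mul]
        rw [hMsym' i j, hJsym' i j]
        by_cases hij : i = j <;> simp [hij, eq_comm]
      · intro x
        rw [star_trivial, sub_mulVec, dotProduct_sub, smul_mulVec, dotProduct_smul,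
          smul_eq_mul, hexppos]
        obtain ⟨w, hw0, hq1, hq2⟩ := key x
        rw [hq1, hq2]
        have hcs : (w ⬝ᵥ (M *ᵥ w)) * (w ⬝ᵥ (M *ᵥ w)) ≤ (w ⬝ᵥ w) * ((M *ᵥ w) ⬝ᵥ (M *ᵥ w)) := by
          have hh := Finset.sum_mul_sq_le_sq_mul_sq Finset.univ w (M *ᵥ w)
          simp only [pow_two] at hh
          simpa only [dotProduct] using hh
        have hb := h w hw0
        have hQ := hMpsd w
        have hA := hdot_self w
        have hQle : w ⬝ᵥ (M *ᵥ w) ≤ lam * (w ⬝ᵥ w) := by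
          nlinarith [hcs, mul_le_mul_of_nonneg_left hb hA, hQ, hA, mul_nonneg hlam0 hA]
        have step : (1 - lam) * (w ⬝ᵥ w) ≤ w ⬝ᵥ w - w ⬝ᵥ (M *ᵥ w) := by nlinarith
        have step' := mul_le_mul_of_nonneg_left step (inv_pos.mpr h1l).le
        rw [← mul_assoc, inv_mul_cancel₀ h1l.ne', one_mul] at step'
        linarith
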